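/- Assume the normalization ‖m'‖_{L∞(0,1)} + ‖m''‖_{L∞(0,1)} + max_{[0,1]} c − min_{[0,1]} c ≤ 1/2. Let k* ≥ 2 be an integer, x₀ ∈ (0,1), and let a > 0 and R > 0 be such that (x₀ − 4R, x₀ + 4R) ⊂ (0,1) and m'(x)² ≥ a·|x − x₀|^{2(k*−1)} for every x ∈ (x₀ − 4R, x₀ + 4R). Then for every s ≥ 1, every principal eigenfunction w(s,·) as in the context, and every x with |x − x₀| < 2R, one has w(s,x) ≤ e^{1 − s^{1/2}·(|x − x₀| − (3/(a s))^{1/(2k*−2)})} · max_{|y − x₀| ≤ 2|x − x₀|} w(s,y). -/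

import Mathlib

open MeasureTheory Filter Set Topology

lemma max_principle (u : ℝ → ℝ) (α β : ℝ) (hαβ : α < β) (hu : ContDiff ℝ 2 u)
    (hode : ∀ t ∈ Set.Ioo α β, 0 < u t → 0 < deriv (deriv u) t)
    (hα : u α ≤ 0) (hβ : u β ≤ 0) : ∀ t ∈ Set.Icc α β, u t ≤ 0 := by
  have hcont : ContinuousOn u (Set.Icc α β) := hu.continuous.continuousOn
  obtain ⟨y, hy, hmax⟩ :=
    isCompact_Icc.exists_isMaxOn (Set.nonempty_Icc.2 hαβ.le) hcont
  intro t ht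
  have hty : u t ≤ u y := hmax ht
  by_contra hpos'
  push_neg at hpos'
  have hpos : 0 < u y := lt_of_lt_of_le hpos' hty
  have hyα : α < y := lt_of_le_of_ne hy.1 (by rintro rfl; exact absurd hpos (not_lt.2 hα))
  have hyβ : y < β := lt_of_le_of_ne hy.2 (by rintro h; rw [h] at hpos; exact absurd hpos (not_lt.2 hβ))
  have hloc : IsLocalMax u y := hmax.isLocalMax (Icc_mem_nhds hyα hyβ)
  have hd0 : deriv u y = 0 := hloc.deriv_eq_zero
  have hD : 0 < deriv (deriv u) y := hode y ⟨hyα, hyβ⟩ hpos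
  have h1 : ContDiff ℝ 1 (deriv u) := by
    have := (contDiff_succ_iff_deriv (n := 1)).mp (by exact_mod_cast hu)
    exact this.2.2
  have hdiff : Differentiable ℝ u := hu.differentiable (by norm_num)
  have hdd : HasDerivAt (deriv u) (deriv (deriv u) y) y :=
    ((h1.differentiable (by norm_num)) y).hasDerivAt
  rw [hasDerivAt_iff_tendsto_slope] at hdd
  have hev : ∀ᶠ z in 𝓝[>] y, 0 < slope (deriv u) y z := by
    have h2 : ∀ᶠ z in 𝓝[≠] y, 0 < slope (deriv u) y z :=
      hdd (Ioi_mem_nhds hD)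
    exact nhdsWithin_mono y (fun z hz => ne_of_gt hz) h2
  obtain ⟨b, hb, hsub⟩ := mem_nhdsGT_iff_exists_Ioo_subset.mp hev
  have hyb : y < b := hb
  set t' := min ((y + b) / 2) ((y + β) / 2) with ht'
  have hyt' : y < t' := lt_min (by linarith) (by linarith)
  have ht'b : t' < b := lt_of_le_of_lt (min_le_left _ _) (by linarith)
  have ht'β : t' < β := lt_of_le_of_lt (min_le_right _ _) (by linarith)
  have hmono : StrictMonoOn u (Set.Icc y t') := by
    apply strictMonoOn_of_deriv_pos (convex_Icc y t') hu.continuous.continuousOn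
    intro z hz
    rw [interior_Icc] at hz
    have hz' : z ∈ Set.Ioo y b := ⟨hz.1, lt_trans hz.2 ht'b⟩
    have hslope := hsub hz'
    have : 0 < (deriv u z - deriv u y) / (z - y) := by
      have := hslope
      simpa [slope_def_field, div_eq_iff] using this
    have hzy : 0 < z - y := by linarith [hz.1]
    have : 0 < deriv u z - deriv u y := by
      have := mul_pos this hzy
      rwa [div_mul_cancel₀] at this
      exact ne_of_gt hzy
    linarith [hd0]
  have : u y < u t' := hmono (Set.left_mem_Icc.2 hyt'.le) ⟨hyt'.le, le_refl t'⟩ hyt'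
  have : u t' ≤ u y := hmax ⟨by linarith [hy.1], ht'β.le⟩
  linarith

lemma agmon (w : ℝ → ℝ) (μ α β M : ℝ) (hw : ContDiff ℝ 2 w) (hμ : 0 < μ) (hαβ : α < β)
    (hM : 0 ≤ M)
    (hode : ∀ t ∈ Set.Ioo α β, 0 < w t → μ^2 * w t ≤ deriv (deriv w) t)
    (hA : w α ≤ M) (hB : w β ≤ M) :
    ∀ t ∈ Set.Icc α β, w t ≤ M * Real.exp (-μ*(t-α)) + M * Real.exp (-μ*(β-t)) := by
  set h : ℝ → ℝ := fun t => M * Real.exp (-μ*(t-α)) + M * Real.exp (-μ*(β-t)) with hh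
  set h1 : ℝ → ℝ := fun t =>
    M * Real.exp (-μ*(t-α)) * (-μ) + M * Real.exp (-μ*(β-t)) * μ with hh1
  have hd : ∀ t, HasDerivAt h (h1 t) t := by
    intro t
    have e1 : HasDerivAt (fun t => -μ*(t-α)) (-μ) t := by
      simpa using ((hasDerivAt_id t).sub_const α).const_mul (-μ)
    have e2 : HasDerivAt (fun t => -μ*(β-t)) μ t := by
      simpa using ((hasDerivAt_id t).const_sub β).const_mul (-μ)
    have H := ((e1.exp.const_mul M).add (e2.exp.const_mul M))
    exact H.congr_deriv (by simp only [hh1]; ring)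
  have hd1 : ∀ t, HasDerivAt h1 (μ^2 * h t) t := by
    intro t
    have e1 : HasDerivAt (fun t => -μ*(t-α)) (-μ) t := by
      simpa using ((hasDerivAt_id t).sub_const α).const_mul (-μ)
    have e2 : HasDerivAt (fun t => -μ*(β-t)) μ t := by
      simpa using ((hasDerivAt_id t).const_sub β).const_mul (-μ)
    have H := (((e1.exp.const_mul M).mul_const (-μ)).add ((e2.exp.const_mul M).mul_const μ))
    exact H.congr_deriv (by simp only [hh]; ring)
  have hch : ContDiff ℝ 2 h := by
    apply ContDiff.add <;> apply ContDiff.mul contDiff_const <;> apply Real.contDiff_exp.comp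
    · exact contDiff_const.mul (contDiff_id.sub contDiff_const)
    · exact contDiff_const.mul (contDiff_const.sub contDiff_id)
  set u : ℝ → ℝ := fun t => w t - h t with hu
  have hcu : ContDiff ℝ 2 u := hw.sub hch
  have hderivu : deriv u = fun t => deriv w t - h1 t := by
    funext t
    rw [hu]
    rw [deriv_fun_sub (hw.differentiable (by norm_num) t) (hd t).differentiableAt]
    rw [(hd t).deriv]
  have hdw : Differentiable ℝ (deriv w) := by
    have := (contDiff_succ_iff_deriv (n := 1)).mp (by exact_mod_cast hw)
    exact this.2.2.differentiable (by norm_num)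
  have hderiv2u : ∀ t, deriv (deriv u) t = deriv (deriv w) t - μ^2 * h t := by
    intro t
    rw [hderivu]
    rw [deriv_fun_sub (hdw t) (hd1 t).differentiableAt, (hd1 t).deriv]
  have hnonneg : ∀ t, 0 ≤ h t := fun t => by positivity
  have key : ∀ t ∈ Set.Icc α β, u t ≤ 0 := by
    apply max_principle u α β hαβ hcu
    · intro t ht hut
      rw [hderiv2u]
      have hwt : 0 < w t := lt_of_le_of_lt (hnonneg t) (by simpa [hu, sub_pos] using hut)
      have := hode t ht hwt
      have : μ^2 * u t ≤ deriv (deriv w) t - μ^2 * h t := by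
        simp only [hu]; nlinarith
      nlinarith [sq_nonneg μ, mul_pos (pow_pos hμ 2) (show (0:ℝ) < u t from hut)]
    · have : h α = M + M * Real.exp (-μ*(β-α)) := by simp [hh]
      simp only [hu, this]
      nlinarith [Real.exp_pos (-μ*(β-α)), hA]
    · have : h β = M * Real.exp (-μ*(β-α)) + M := by simp [hh]
      simp only [hu, this]
      nlinarith [Real.exp_pos (-μ*(β-α)), hB]
  intro t ht
  exact sub_nonpos.mp (key t ht)

/-- The Neumann principal eigenvalue of `-φ'' - 2 s m' φ' + c φ = λ φ` on `(0,1)`,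
via its variational characterization. -/
noncomputable def lambdaN (m c : ℝ → ℝ) (s : ℝ) : ℝ :=
  sInf {l : ℝ | ∃ φ : ℝ → ℝ, ContDiff ℝ 1 φ ∧
    (∫ x in (0:ℝ)..1, Real.exp (2 * s * m x) * (φ x) ^ 2) = 1 ∧
    l = ∫ x in (0:ℝ)..1, Real.exp (2 * s * m x) * ((deriv φ x) ^ 2 + c x * (φ x) ^ 2)}

lemma lambdaN_le (m c : ℝ → ℝ) (hm : ContDiff ℝ 2 m) (hc : Continuous c) (s : ℝ) :
    lambdaN m c s ≤ sSup (c '' Set.Icc (0:ℝ) 1) := by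
  set S := sSup (c '' Set.Icc (0:ℝ) 1) with hS
  set J := sInf (c '' Set.Icc (0:ℝ) 1) with hJ
  have hbddA : BddAbove (c '' Set.Icc (0:ℝ) 1) := (isCompact_Icc.image hc).bddAbove
  have hbddB : BddBelow (c '' Set.Icc (0:ℝ) 1) := (isCompact_Icc.image hc).bddBelow
  have hcS : ∀ x ∈ Set.Icc (0:ℝ) 1, c x ≤ S := fun x hx =>
    le_csSup hbddA (Set.mem_image_of_mem c hx)
  have hcJ : ∀ x ∈ Set.Icc (0:ℝ) 1, J ≤ c x := fun x hx =>
    csInf_le hbddB (Set.mem_image_of_mem c hx)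
  have hem : Continuous (fun x => Real.exp (2 * s * m x)) :=
    Real.continuous_exp.comp (continuous_const.mul hm.continuous)
  set I := ∫ x in (0:ℝ)..1, Real.exp (2 * s * m x) with hId
  have hI : 0 < I :=
    intervalIntegral.intervalIntegral_pos_of_pos (hem.intervalIntegrable 0 1)
      (fun x => Real.exp_pos _) one_pos
  set c₀ : ℝ := (Real.sqrt I)⁻¹ with hc₀d
  have hc₀ : c₀ ^ 2 = I⁻¹ := by
    rw [hc₀d, ← Real.sqrt_inv, Real.sq_sqrt (by positivity)]
  have hnormφ : (∫ x in (0:ℝ)..1, Real.exp (2 * s * m x) * ((fun _ : ℝ => c₀) x) ^ 2) = 1 := by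
    simp only
    rw [intervalIntegral.integral_mul_const, hc₀, ← hId]
    field_simp
  have hder : deriv (fun _ : ℝ => c₀) = fun _ => (0:ℝ) := by
    funext x; exact deriv_const x c₀
  set l₀ := ∫ x in (0:ℝ)..1,
      Real.exp (2 * s * m x) * ((deriv (fun _ : ℝ => c₀) x) ^ 2 + c x * ((fun _ : ℝ => c₀) x) ^ 2)
  have hmem : l₀ ∈ {l : ℝ | ∃ φ : ℝ → ℝ, ContDiff ℝ 1 φ ∧
      (∫ x in (0:ℝ)..1, Real.exp (2 * s * m x) * (φ x) ^ 2) = 1 ∧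
      l = ∫ x in (0:ℝ)..1, Real.exp (2 * s * m x) * ((deriv φ x) ^ 2 + c x * (φ x) ^ 2)} :=
    ⟨fun _ => c₀, contDiff_const, hnormφ, rfl⟩
  have hbdd : BddBelow {l : ℝ | ∃ φ : ℝ → ℝ, ContDiff ℝ 1 φ ∧
      (∫ x in (0:ℝ)..1, Real.exp (2 * s * m x) * (φ x) ^ 2) = 1 ∧
      l = ∫ x in (0:ℝ)..1, Real.exp (2 * s * m x) * ((deriv φ x) ^ 2 + c x * (φ x) ^ 2)} := by
    refine ⟨J, ?_⟩
    rintro l ⟨φ, hφ, hnφ, rfl⟩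
    have hφc : Continuous φ := hφ.continuous
    have hφ'c : Continuous (deriv φ) := hφ.continuous_deriv le_rfl
    have hle : ∀ x ∈ Set.Icc (0:ℝ) 1,
        J * (Real.exp (2 * s * m x) * (φ x) ^ 2)
          ≤ Real.exp (2 * s * m x) * ((deriv φ x) ^ 2 + c x * (φ x) ^ 2) := by
      intro x hx
      have h1 := hcJ x hx
      have h2 : (0:ℝ) ≤ (φ x)^2 := sq_nonneg _
      have h3 : (0:ℝ) < Real.exp (2*s*m x) := Real.exp_pos _
      nlinarith [sq_nonneg (deriv φ x),
        mul_le_mul_of_nonneg_left (mul_le_mul_of_nonneg_right h1 h2) h3.le]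
    have hint1 : IntervalIntegrable
        (fun x => J * (Real.exp (2 * s * m x) * (φ x) ^ 2)) volume 0 1 :=
      ((continuous_const.mul (hem.mul (hφc.pow 2)))).intervalIntegrable 0 1
    have hint2 : IntervalIntegrable
        (fun x => Real.exp (2 * s * m x) * ((deriv φ x) ^ 2 + c x * (φ x) ^ 2)) volume 0 1 :=
      (hem.mul ((hφ'c.pow 2).add (hc.mul (hφc.pow 2)))).intervalIntegrable 0 1
    have := intervalIntegral.integral_mono_on (by norm_num) hint1 hint2 hle
    rwa [intervalIntegral.integral_const_mul, hnφ, mul_one] at this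
  have h1 : lambdaN m c s ≤ l₀ := csInf_le hbdd hmem
  have h2 : l₀ ≤ S := by
    have hle : ∀ x ∈ Set.Icc (0:ℝ) 1,
        Real.exp (2 * s * m x) * ((deriv (fun _ : ℝ => c₀) x) ^ 2 + c x * ((fun _ : ℝ => c₀) x) ^ 2)
          ≤ (S * c₀ ^ 2) * Real.exp (2 * s * m x) := by
      intro x hx
      simp only [hder]
      have h1 := hcS x hx
      have h3 : (0:ℝ) < Real.exp (2*s*m x) := Real.exp_pos _
      have h4 : (0:ℝ) ≤ c₀^2 := sq_nonneg _
      have h5 := mul_le_mul_of_nonneg_left (mul_le_mul_of_nonneg_right h1 h4) h3.le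
      nlinarith [h5]
    have hint2 : IntervalIntegrable
        (fun x => Real.exp (2 * s * m x) *
          ((deriv (fun _ : ℝ => c₀) x) ^ 2 + c x * ((fun _ : ℝ => c₀) x) ^ 2)) volume 0 1 := by
      simp only [hder]
      exact (hem.mul ((continuous_const.pow 2).add
        (hc.mul (continuous_const.pow 2)))).intervalIntegrable 0 1
    have hint1 : IntervalIntegrable
        (fun x => (S * c₀ ^ 2) * Real.exp (2 * s * m x)) volume 0 1 :=
      (continuous_const.mul hem).intervalIntegrable 0 1
    have := intervalIntegral.integral_mono_on (by norm_num) hint2 hint1 hle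
    rw [intervalIntegral.integral_const_mul, ← hId, hc₀] at this
    calc l₀ ≤ S * I⁻¹ * I := this
    _ = S := by field_simp
  linarith

/-- `v` is a positive, `L²`-normalized principal eigenfunction (in the transformed
variable `w = e^{s m} φ`) associated with the eigenvalue `lam` and parameter `s`. -/
def IsPrincipalEigenfunction (m c : ℝ → ℝ) (lam s : ℝ) (v : ℝ → ℝ) : Prop :=
  ContDiff ℝ 2 v ∧ (∀ x ∈ Set.Icc (0:ℝ) 1, 0 < v x) ∧
  (∀ x ∈ Set.Ioo (0:ℝ) 1,
    -(deriv (deriv v) x) + (s ^ 2 * (deriv m x) ^ 2 + s * deriv (deriv m) x + c x) * v x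
      = lam * v x) ∧
  deriv v 0 = s * v 0 * deriv m 0 ∧ deriv v 1 = s * v 1 * deriv m 1 ∧
  (∫ x in (0:ℝ)..1, (v x) ^ 2) = 1

set_option maxHeartbeats 2000000 in
/-- Lemma 3.3: under the normalization and the degeneracy lower bound
`m'(x)² ≥ a |x − x₀|^{2(k*−1)}` near `x₀`, every principal eigenfunction satisfies
`w(s,x) ≤ e^{1 − s^{1/2}(|x−x₀| − (3/(as))^{1/(2k*−2)})} max_{B(x₀,2|x−x₀|)} w(s,·)`
for `s ≥ 1` and `|x − x₀| < 2R`. -/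
theorem eigenfunction_pointwise_decay_estimate
    (m c : ℝ → ℝ) (hm : ContDiff ℝ 2 m) (hc : Continuous c)
    (hnorm : sSup ((fun x => |deriv m x|) '' Set.Icc (0:ℝ) 1) +
             sSup ((fun x => |deriv (deriv m) x|) '' Set.Icc (0:ℝ) 1) +
             (sSup (c '' Set.Icc (0:ℝ) 1) - sInf (c '' Set.Icc (0:ℝ) 1)) ≤ 1/2)
    (kstar : ℕ) (hk : 2 ≤ kstar)
    (x₀ a R : ℝ) (hx₀ : x₀ ∈ Set.Ioo (0:ℝ) 1) (ha : 0 < a) (hR : 0 < R)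
    (hsub : Set.Ioo (x₀ - 4*R) (x₀ + 4*R) ⊆ Set.Ioo (0:ℝ) 1)
    (hlow : ∀ x ∈ Set.Ioo (x₀ - 4*R) (x₀ + 4*R),
      a * |x - x₀| ^ (2 * (kstar - 1)) ≤ (deriv m x) ^ 2) :
    ∀ s ≥ (1:ℝ), ∀ v : ℝ → ℝ,
      IsPrincipalEigenfunction m c (lambdaN m c s) s v →
      ∀ x : ℝ, |x - x₀| < 2 * R →
        v x ≤ Real.exp (1 - Real.sqrt s *
            (|x - x₀| - (3 / (a * s)) ^ ((1:ℝ) / (2 * (kstar:ℝ) - 2)))) *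
          sSup (v '' Set.Icc (x₀ - 2 * |x - x₀|) (x₀ + 2 * |x - x₀|)) := by
  intro s hs v hv x hx
  obtain ⟨hv2, hvpos, hode, _, _, _⟩ := hv
  have hs0 : (0:ℝ) < s := by linarith
  set μ := Real.sqrt s with hμd
  have hμ : 0 < μ := Real.sqrt_pos.2 hs0
  have hμ2 : μ ^ 2 = s := Real.sq_sqrt hs0.le
  set ε := (3 / (a * s)) ^ ((1:ℝ) / (2 * (kstar:ℝ) - 2)) with hεd
  have hbase : (0:ℝ) < 3 / (a * s) := by positivity
  have hε : 0 < ε := Real.rpow_pos_of_pos hbase _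
  set r := |x - x₀| with hrd
  have hr0 : 0 ≤ r := abs_nonneg _
  -- the band is inside (0,1)
  have hband_sub : Set.Icc (x₀ - 2*r) (x₀ + 2*r) ⊆ Set.Ioo (0:ℝ) 1 := by
    intro y hy
    apply hsub
    constructor
    · have := hy.1; linarith [hx]
    · have := hy.2; linarith [hx]
  set M := sSup (v '' Set.Icc (x₀ - 2*r) (x₀ + 2*r)) with hMd
  have hvc : Continuous v := hv2.continuous
  have hbddM : BddAbove (v '' Set.Icc (x₀ - 2*r) (x₀ + 2*r)) :=
    (isCompact_Icc.image hvc).bddAbove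
  have hMge : ∀ y ∈ Set.Icc (x₀ - 2*r) (x₀ + 2*r), v y ≤ M := fun y hy =>
    le_csSup hbddM (Set.mem_image_of_mem v hy)
  have hxband : x ∈ Set.Icc (x₀ - 2*r) (x₀ + 2*r) := by
    constructor <;> [nlinarith [abs_le.1 (le_refl r) , neg_abs_le (x - x₀)];
      nlinarith [le_abs_self (x - x₀)]]
  have hxIcc : x ∈ Set.Icc (0:ℝ) 1 :=
    Set.mem_Icc_of_Ioo (hband_sub hxband)
  have hMpos : 0 < M := lt_of_lt_of_le (hvpos x hxIcc) (hMge x hxband)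
  by_cases hcase : 0 ≤ 1 - μ * (r - ε)
  · -- easy case: the exponential factor is at least 1
    have h1 : (1:ℝ) ≤ Real.exp (1 - μ * (r - ε)) := Real.one_le_exp hcase
    have h2 : v x ≤ M := hMge x hxband
    nlinarith
  · -- hard case
    push_neg at hcase
    have hrε : ε < r := by nlinarith
    have hrpos : 0 < r := lt_trans hε hrε
    -- the key potential bound
    have hcS := lambdaN_le m c hm hc s
    set S := sSup (c '' Set.Icc (0:ℝ) 1) with hSd
    set J := sInf (c '' Set.Icc (0:ℝ) 1) with hJd
    have hbddcA : BddAbove (c '' Set.Icc (0:ℝ) 1) := (isCompact_Icc.image hc).bddAbove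
    have hbddcB : BddBelow (c '' Set.Icc (0:ℝ) 1) := (isCompact_Icc.image hc).bddBelow
    have hm1 : ContDiff ℝ 1 (deriv m) := by
      have := (contDiff_succ_iff_deriv (n := 1)).mp (by exact_mod_cast hm)
      exact this.2.2
    have hm'c : Continuous (deriv m) := hm.continuous_deriv (by norm_num)
    have hm''c : Continuous (deriv (deriv m)) := hm1.continuous_deriv le_rfl
    have hbddB2 : BddAbove ((fun x => |deriv (deriv m) x|) '' Set.Icc (0:ℝ) 1) :=
      (isCompact_Icc.image hm''c.abs).bddAbove
    have hbddA2 : BddAbove ((fun x => |deriv m x|) '' Set.Icc (0:ℝ) 1) :=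
      (isCompact_Icc.image hm'c.abs).bddAbove
    have hA0 : 0 ≤ sSup ((fun x => |deriv m x|) '' Set.Icc (0:ℝ) 1) := by
      have : |deriv m 0| ≤ _ := le_csSup hbddA2
        (Set.mem_image_of_mem _ (by norm_num : (0:ℝ) ∈ Set.Icc (0:ℝ) 1))
      exact le_trans (abs_nonneg _) this
    have hB2 : ∀ t ∈ Set.Icc (0:ℝ) 1, |deriv (deriv m) t| ≤
        sSup ((fun x => |deriv (deriv m) x|) '' Set.Icc (0:ℝ) 1) := fun t ht =>
      le_csSup hbddB2 (Set.mem_image_of_mem _ ht)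
    have hB0 : 0 ≤ sSup ((fun x => |deriv (deriv m) x|) '' Set.Icc (0:ℝ) 1) :=
      le_trans (abs_nonneg _) (hB2 0 (by norm_num))
    have hSJ : J ≤ S := by
      have h1 : J ≤ c 0 := csInf_le hbddcB (Set.mem_image_of_mem c (by norm_num))
      have h2 : c 0 ≤ S := le_csSup hbddcA (Set.mem_image_of_mem c (by norm_num))
      linarith
    have hBhalf : sSup ((fun x => |deriv (deriv m) x|) '' Set.Icc (0:ℝ) 1) ≤ 1/2 := by
      linarith
    have hSJhalf : S - J ≤ 1/2 := by linarith
    have hcJ : ∀ t ∈ Set.Icc (0:ℝ) 1, J ≤ c t := fun t ht =>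
      csInf_le hbddcB (Set.mem_image_of_mem c ht)
    -- ε to the power 2(k-1) equals 3/(a s)
    have hncast : ((2 * (kstar - 1) : ℕ) : ℝ) = 2 * (kstar:ℝ) - 2 := by
      have h1 : 1 ≤ kstar := by omega
      push_cast [Nat.cast_sub h1]
      ring
    have hkne : (2 * (kstar:ℝ) - 2) ≠ 0 := by
      have : (2:ℝ) ≤ (kstar:ℝ) := by exact_mod_cast hk
      linarith
    have hεpow : ε ^ (2 * (kstar - 1)) = 3 / (a * s) := by
      rw [hεd, ← Real.rpow_natCast _ (2 * (kstar - 1)), ← Real.rpow_mul hbase.le, hncast,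
        one_div, inv_mul_cancel₀ hkne, Real.rpow_one]
    -- potential lower bound
    have hpot : ∀ t ∈ Set.Ioo (x₀ - 4*R) (x₀ + 4*R), ε ≤ |t - x₀| →
        s ≤ (s ^ 2 * (deriv m t) ^ 2 + s * deriv (deriv m) t + c t) - lambdaN m c s := by
      intro t ht hεt
      have htIcc : t ∈ Set.Icc (0:ℝ) 1 := Set.mem_Icc_of_Ioo (hsub ht)
      have h1 : a * |t - x₀| ^ (2 * (kstar - 1)) ≤ (deriv m t) ^ 2 := hlow t ht
      have h2 : ε ^ (2 * (kstar - 1)) ≤ |t - x₀| ^ (2 * (kstar - 1)) :=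
        pow_le_pow_left₀ hε.le hεt _
      have h3 : 3 / s ≤ (deriv m t) ^ 2 := by
        have := mul_le_mul_of_nonneg_left h2 ha.le
        rw [hεpow] at this
        calc 3 / s = a * (3 / (a * s)) := by field_simp
        _ ≤ a * |t - x₀| ^ (2 * (kstar - 1)) := this
        _ ≤ (deriv m t) ^ 2 := h1
      have h4 : 3 * s ≤ s ^ 2 * (deriv m t) ^ 2 := by
        have := mul_le_mul_of_nonneg_left h3 (by positivity : (0:ℝ) ≤ s ^ 2)
        calc 3 * s = s ^ 2 * (3 / s) := by field_simp
        _ ≤ _ := this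
      have h5 : -(1/2) ≤ deriv (deriv m) t := by
        have := hB2 t htIcc
        have := abs_le.1 (le_trans this hBhalf)
        linarith [(abs_le.1 (le_trans (hB2 t htIcc) hBhalf)).1]
      have h6 : J ≤ c t := hcJ t htIcc
      have h8 : s * (-(1/2)) ≤ s * deriv (deriv m) t :=
        mul_le_mul_of_nonneg_left h5 hs0.le
      have h9 : lambdaN m c s ≤ S := hcS
      have h10 : s * (-(1/2)) = -(s/2) := by ring
      rw [h10] at h8
      linarith [hs, hSJhalf, h4, h6, h8, h9]
    -- apply the comparison argument on the correct side
    rcases le_or_gt x₀ x with hxside | hxside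
    · -- x ≥ x₀
      have hrx : r = x - x₀ := abs_of_nonneg (by linarith)
      set α := x₀ + ε with hαd
      set β := x₀ + 2*r with hβd
      have hαβ : α < β := by simp only [hαd, hβd]; linarith
      have hkey := agmon v μ α β M hv2 hμ hαβ hMpos.le ?_ ?_ ?_ x ⟨by simp only [hαd]; linarith, by simp only [hβd]; linarith⟩
      · have e1 : -μ * (x - α) = -(μ * (r - ε)) := by simp only [hαd]; rw [hrx]; ring
        have e2 : Real.exp (-μ * (β - x)) ≤ Real.exp (-(μ * (r - ε))) := by
          apply Real.exp_le_exp.2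
          simp only [hβd]
          rw [hrx]
          nlinarith [hε.le]
        rw [e1] at hkey
        have h2M : v x ≤ 2 * M * Real.exp (-(μ * (r - ε))) := by
          have := mul_le_mul_of_nonneg_left e2 hMpos.le
          nlinarith
        have hfin : 2 * M * Real.exp (-(μ * (r - ε))) ≤
            Real.exp (1 - μ * (r - ε)) * M := by
          have hexp : Real.exp (1 - μ * (r - ε)) = Real.exp 1 * Real.exp (-(μ * (r - ε))) := by
            rw [← Real.exp_add]; ring_nf
          rw [hexp]
          have h2e : (2:ℝ) ≤ Real.exp 1 := by
            have := Real.add_one_le_exp (1:ℝ)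
            linarith
          have h3 : 2 * Real.exp (-(μ * (r - ε))) ≤ Real.exp 1 * Real.exp (-(μ * (r - ε))) :=
            mul_le_mul_of_nonneg_right h2e (Real.exp_pos _).le
          have h4 : 2 * Real.exp (-(μ * (r - ε))) * M ≤
              Real.exp 1 * Real.exp (-(μ * (r - ε))) * M :=
            mul_le_mul_of_nonneg_right h3 hMpos.le
          linarith [h4]
        linarith
      · -- ODE hypothesis on (α, β)
        intro t ht hvt
        have htR : t ∈ Set.Ioo (x₀ - 4*R) (x₀ + 4*R) := by
          constructor
          · have := ht.1; simp only [hαd] at this; linarith [hε.le, hR]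
          · have := ht.2; simp only [hβd] at this; linarith [hx]
        have htIoo : t ∈ Set.Ioo (0:ℝ) 1 := hsub htR
        have hεt : ε ≤ |t - x₀| := by
          have h1 : x₀ + ε < t := ht.1
          rw [abs_of_pos (by linarith [hε] : (0:ℝ) < t - x₀)]
          linarith
        have hpde := hode t htIoo
        have hP := hpot t htR hεt
        have hvt' : 0 < v t := hvpos t (Set.mem_Icc_of_Ioo htIoo)
        rw [hμ2]
        nlinarith
      · -- v α ≤ M
        apply hMge
        constructor <;> simp only [hαd] <;> nlinarith [hε.le, hrε]
      · apply hMge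
        constructor <;> simp only [hβd] <;> linarith
    · -- x < x₀
      have hrx : r = x₀ - x := by rw [hrd, abs_of_neg (by linarith : x - x₀ < 0)]; ring
      set α := x₀ - 2*r with hαd
      set β := x₀ - ε with hβd
      have hαβ : α < β := by simp only [hαd, hβd]; linarith
      have hkey := agmon v μ α β M hv2 hμ hαβ hMpos.le ?_ ?_ ?_ x ⟨by simp only [hαd]; linarith, by simp only [hβd]; linarith⟩
      · have e1 : -μ * (β - x) = -(μ * (r - ε)) := by simp only [hβd]; rw [hrx]; ring
        have e2 : Real.exp (-μ * (x - α)) ≤ Real.exp (-(μ * (r - ε))) := by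
          apply Real.exp_le_exp.2
          simp only [hαd]
          rw [hrx]
          nlinarith [hε.le]
        rw [e1] at hkey
        have h2M : v x ≤ 2 * M * Real.exp (-(μ * (r - ε))) := by
          have := mul_le_mul_of_nonneg_left e2 hMpos.le
          nlinarith
        have hfin : 2 * M * Real.exp (-(μ * (r - ε))) ≤
            Real.exp (1 - μ * (r - ε)) * M := by
          have hexp : Real.exp (1 - μ * (r - ε)) = Real.exp 1 * Real.exp (-(μ * (r - ε))) := by
            rw [← Real.exp_add]; ring_nf
          rw [hexp]
          have h2e : (2:ℝ) ≤ Real.exp 1 := by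
            have := Real.add_one_le_exp (1:ℝ)
            linarith
          have h3 : 2 * Real.exp (-(μ * (r - ε))) ≤ Real.exp 1 * Real.exp (-(μ * (r - ε))) :=
            mul_le_mul_of_nonneg_right h2e (Real.exp_pos _).le
          have h4 : 2 * Real.exp (-(μ * (r - ε))) * M ≤
              Real.exp 1 * Real.exp (-(μ * (r - ε))) * M :=
            mul_le_mul_of_nonneg_right h3 hMpos.le
          linarith [h4]
        linarith
      · intro t ht hvt
        have htR : t ∈ Set.Ioo (x₀ - 4*R) (x₀ + 4*R) := by
          constructor
          · have := ht.1; simp only [hαd] at this; linarith [hx]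
          · have := ht.2; simp only [hβd] at this; linarith [hε.le, hR]
        have htIoo : t ∈ Set.Ioo (0:ℝ) 1 := hsub htR
        have hεt : ε ≤ |t - x₀| := by
          have h1 : t < x₀ - ε := ht.2
          rw [abs_of_neg (by linarith [hε] : t - x₀ < 0)]
          linarith
        have hpde := hode t htIoo
        have hP := hpot t htR hεt
        have hvt' : 0 < v t := hvpos t (Set.mem_Icc_of_Ioo htIoo)
        rw [hμ2]
        nlinarith
      · apply hMge
        constructor <;> simp only [hαd] <;> linarith
      · apply hMge
        constructor <;> simp only [hβd] <;> nlinarith [hε.le, hrε]
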